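/- Let (Ω,m) be a measure space with two commuting, free, measure-preserving actions of a countable group Γ (written from the left and from the right), each admitting a finite-measure fundamental domain, and assume the Γ×Γ-action on (Ω,m) is ergodic. If X ⊂ Ω is a fundamental domain for the right action and Y ⊂ Ω is a fundamental domain for the left action with m(X) = m(Y), then there exists a subset Z ⊂ Ω that is simultaneously a fundamental domain for both the left and the right Γ-action. -/

import Mathlib

open MeasureTheory Set
open scoped ENNReal

set_option linter.unusedSectionVars false
set_option maxHeartbeats 1000000

/-- A measurable set `D` is a fundamental domain for the action `a : Γ → Ω → Ω` (mod `m`)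
if almost every point can be moved into `D` by exactly one group element. -/
def IsFundDom {Ω Γ : Type*} [MeasurableSpace Ω] (m : Measure Ω)
    (a : Γ → Ω → Ω) (D : Set Ω) : Prop :=
  MeasurableSet D ∧ ∀ᵐ ω ∂m, ∃! γ : Γ, a γ ω ∈ D

namespace CommonFD

variable {Ω : Type*} [MeasurableSpace Ω] {Γ : Type*} [Group Γ] [Countable Γ]

/-- Saturation: points some translate of which lies in `W`. -/
def orbE (a : Γ → Ω → Ω) (W : Set Ω) : Set Ω := ⋃ γ : Γ, (a γ) ⁻¹' W

lemma mem_orbE {a : Γ → Ω → Ω} {W : Set Ω} {ω : Ω} :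
    ω ∈ orbE a W ↔ ∃ γ, a γ ω ∈ W := by simp [orbE]

/-- At most one translate lies in `W`. -/
def UC (a : Γ → Ω → Ω) (W : Set Ω) (ω : Ω) : Prop :=
  ∀ γ γ' : Γ, a γ ω ∈ W → a γ' ω ∈ W → γ = γ'

lemma measurableSet_orbE {a : Γ → Ω → Ω} (hmeas : ∀ γ, Measurable (a γ))
    {W : Set Ω} (hW : MeasurableSet W) : MeasurableSet (orbE a W) :=
  MeasurableSet.iUnion fun γ => (hmeas γ) hW

lemma orbE_mono {a : Γ → Ω → Ω} {W W' : Set Ω} (h : W ⊆ W') :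
    orbE a W ⊆ orbE a W' := by
  intro ω hω; rcases mem_orbE.mp hω with ⟨γ, hγ⟩; exact mem_orbE.mpr ⟨γ, h hγ⟩

lemma subset_orbE {a : Γ → Ω → Ω} (ha1 : ∀ ω, a 1 ω = ω) (W : Set Ω) :
    W ⊆ orbE a W := fun ω hω => mem_orbE.mpr ⟨1, by rwa [ha1]⟩

lemma UC.mono {a : Γ → Ω → Ω} {W W' : Set Ω} {ω : Ω} (h : W ⊆ W')
    (hUC : UC a W' ω) : UC a W ω := fun γ γ' h1 h2 => hUC γ γ' (h h1) (h h2)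

variable {m : Measure Ω}

lemma null_orbE {a : Γ → Ω → Ω} (hmp : ∀ γ, MeasurePreserving (a γ) m m)
    {W : Set Ω} (hW : MeasurableSet W) (h0 : m W = 0) : m (orbE a W) = 0 :=
  measure_iUnion_null fun γ => by
    rw [(hmp γ).measure_preimage hW.nullMeasurableSet]; exact h0

section Count

variable {a : Γ → Ω → Ω}

/-- pointwise: count equals one under existence and uniqueness. -/
lemma cnt_eq_one {W : Set Ω} {ω : Ω} (hUC : UC a W ω) (hE : ∃ γ, a γ ω ∈ W) :
    ∑' γ : Γ, W.indicator (1 : Ω → ℝ≥0∞) (a γ ω) = 1 := by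
  obtain ⟨γ₀, hγ₀⟩ := hE
  rw [tsum_eq_single γ₀ (fun γ hne => indicator_of_notMem
    (fun hmem => hne (hUC γ γ₀ hmem hγ₀)) _)]
  rw [indicator_of_mem hγ₀]; rfl

lemma cnt_eq_zero {W : Set Ω} {ω : Ω} (hE : ¬ ∃ γ, a γ ω ∈ W) :
    ∑' γ : Γ, W.indicator (1 : Ω → ℝ≥0∞) (a γ ω) = 0 :=
  ENNReal.tsum_eq_zero.mpr fun γ => indicator_of_notMem (fun h => hE ⟨γ, h⟩) _

lemma lint_cnt (hmeas : ∀ γ, Measurable (a γ)) {S T : Set Ω}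
    (hS : MeasurableSet S) (hT : MeasurableSet T) :
    ∫⁻ ω in S, ∑' γ : Γ, T.indicator (1 : Ω → ℝ≥0∞) (a γ ω) ∂m
      = ∑' γ : Γ, m (S ∩ (a γ) ⁻¹' T) := by
  rw [← lintegral_indicator hS]
  have key : ∀ ω, S.indicator (fun ω => ∑' γ : Γ, T.indicator (1 : Ω → ℝ≥0∞) (a γ ω)) ω
      = ∑' γ : Γ, (S ∩ (a γ) ⁻¹' T).indicator (1 : Ω → ℝ≥0∞) ω := by
    intro ω
    by_cases h : ω ∈ S
    · rw [indicator_of_mem h]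
      congr 1; funext γ
      by_cases h2 : a γ ω ∈ T
      · simp [Set.indicator_apply, h, h2]
      · simp [Set.indicator_apply, h, h2]
    · rw [indicator_of_notMem h]
      symm
      exact ENNReal.tsum_eq_zero.mpr fun γ => indicator_of_notMem (fun hc => h hc.1) _
  simp only [key]
  have hmeas' : ∀ γ : Γ, AEMeasurable (fun ω => (S ∩ (a γ) ⁻¹' T).indicator (1 : Ω → ℝ≥0∞) ω) m :=
    fun γ => (measurable_one.indicator (hS.inter ((hmeas γ) hT))).aemeasurable
  rw [lintegral_tsum hmeas']
  congr 1; funext γ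
  exact lintegral_indicator_one (hS.inter ((hmeas γ) hT))

/-- Central counting identity: if `X` is a fundamental domain for `a` and `W` meets a.e.
orbit at most once, then `m W = m (X ∩ orbE a W)`. -/
lemma measure_eq_inter_orbE
    (ha1 : ∀ ω, a 1 ω = ω) (hac : ∀ γ δ ω, a γ (a δ ω) = a (γ * δ) ω)
    (hmeas : ∀ γ, Measurable (a γ)) (hmp : ∀ γ, MeasurePreserving (a γ) m m)
    {X W : Set Ω} (hXm : MeasurableSet X)
    (hXae : ∀ᵐ ω ∂m, (∃ γ, a γ ω ∈ X) ∧ UC a X ω)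
    (hW : MeasurableSet W) (hWuc : ∀ᵐ ω ∂m, UC a W ω) :
    m W = m (X ∩ orbE a W) := by
  have hEm : MeasurableSet (orbE a W) := measurableSet_orbE hmeas hW
  -- RHS = ∫⁻ in X, cnt W
  have hRHS : ∫⁻ ω in X, ∑' γ : Γ, W.indicator (1 : Ω → ℝ≥0∞) (a γ ω) ∂m
      = m (X ∩ orbE a W) := by
    have hcongr : (fun ω => ∑' γ : Γ, W.indicator (1 : Ω → ℝ≥0∞) (a γ ω))
        =ᵐ[m.restrict X] fun ω => (orbE a W).indicator 1 ω := by
      refine ae_restrict_of_ae ?_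
      filter_upwards [hWuc] with ω hω
      by_cases h : ω ∈ orbE a W
      · rw [indicator_of_mem h]; exact cnt_eq_one hω (mem_orbE.mp h)
      · rw [indicator_of_notMem h]; exact cnt_eq_zero (fun hc => h (mem_orbE.mpr hc))
    rw [lintegral_congr_ae hcongr, lintegral_indicator_one hEm, Measure.restrict_apply hEm,
      inter_comm]
  -- LHS = ∫⁻ in W, cnt X = m W
  have hLHS : ∫⁻ ω in W, ∑' γ : Γ, X.indicator (1 : Ω → ℝ≥0∞) (a γ ω) ∂m = m W := by
    have hcongr : (fun ω => ∑' γ : Γ, X.indicator (1 : Ω → ℝ≥0∞) (a γ ω))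
        =ᵐ[m.restrict W] fun _ => 1 := by
      refine ae_restrict_of_ae ?_
      filter_upwards [hXae] with ω hω
      exact cnt_eq_one hω.2 hω.1
    rw [lintegral_congr_ae hcongr, setLIntegral_one]
  rw [← hRHS, lint_cnt hmeas hXm hW, ← hLHS, lint_cnt hmeas hW hXm]
  -- now ∑' γ, m (X ∩ (a γ)⁻¹' W) = ∑' γ, m (W ∩ (a γ)⁻¹' X)
  have e1 : ∀ γ : Γ, m (X ∩ (a γ) ⁻¹' W) = m (W ∩ (a γ⁻¹) ⁻¹' X) := by
    intro γ
    have hset : X ∩ (a γ) ⁻¹' W = (a γ) ⁻¹' ((a γ⁻¹) ⁻¹' X ∩ W) := by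
      ext ω
      simp only [mem_inter_iff, mem_preimage]
      constructor
      · rintro ⟨h1, h2⟩
        refine ⟨?_, h2⟩
        rw [hac, inv_mul_cancel, ha1]; exact h1
      · rintro ⟨h1, h2⟩
        refine ⟨?_, h2⟩
        rw [hac, inv_mul_cancel, ha1] at h1; exact h1
    rw [hset, (hmp γ).measure_preimage (((hmeas γ⁻¹) hXm).inter hW).nullMeasurableSet,
      inter_comm]
  simp only [e1]
  exact ((Equiv.inv Γ).tsum_eq fun γ => m (W ∩ (a γ) ⁻¹' X)).symm

end Count


/-- Selector: inside any measurable `V` one can select a measurable subset meeting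
a.e. orbit at most once, but meeting every orbit that `V` meets. -/
lemma selector {a : Γ → Ω → Ω}
    (ha1 : ∀ ω, a 1 ω = ω) (hac : ∀ γ δ ω, a γ (a δ ω) = a (γ * δ) ω)
    (hmeas : ∀ γ, Measurable (a γ))
    {X : Set Ω} (hXm : MeasurableSet X)
    (hXae : ∀ᵐ ω ∂m, (∃ γ, a γ ω ∈ X) ∧ UC a X ω)
    {V : Set Ω} (hV : MeasurableSet V) :
    ∃ V₁ : Set Ω, MeasurableSet V₁ ∧ V₁ ⊆ V ∧ (∀ᵐ ω ∂m, UC a V₁ ω) ∧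
      (∀ᵐ ω ∂m, ω ∈ V → ω ∈ orbE a V₁) := by
  obtain ⟨e, he⟩ := exists_surjective_nat Γ
  classical
  -- j g = least index of g⁻¹ in the enumeration
  let j : Γ → ℕ := fun g => Nat.find (he g⁻¹)
  have hj1 : ∀ g, e (j g) = g⁻¹ := fun g => Nat.find_spec (he g⁻¹)
  have hj2 : ∀ g i, i < j g → e i ≠ g⁻¹ := fun g i hi => Nat.find_min (he g⁻¹) hi
  refine ⟨⋃ γ : Γ, (V ∩ (a γ) ⁻¹' X ∩ ⋂ i : ℕ, ⋂ (_ : i < j γ), (a (e i * γ)) ⁻¹' Vᶜ),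
    ?_, ?_, ?_, ?_⟩
  · exact MeasurableSet.iUnion fun γ =>
      ((hV.inter ((hmeas γ) hXm)).inter
        (MeasurableSet.iInter fun i => MeasurableSet.iInter fun _ => (hmeas _) hV.compl))
  · intro ω hω
    obtain ⟨γ, hγ⟩ := mem_iUnion.mp hω
    exact hγ.1.1
  · filter_upwards [hXae] with ω₀ hX0
    obtain ⟨⟨γ₀, hγ₀⟩, hXuc⟩ := hX0
    intro g g' hg hg'
    obtain ⟨γ, hγ⟩ := mem_iUnion.mp hg
    obtain ⟨γ', hγ'⟩ := mem_iUnion.mp hg'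
    obtain ⟨⟨hgV, hgX⟩, hgmin⟩ := hγ
    obtain ⟨⟨hg'V, hg'X⟩, hg'min⟩ := hγ'
    rw [mem_preimage, hac] at hgX hg'X
    have hγeq : γ * g = γ₀ := hXuc _ _ hgX hγ₀
    have hγ'eq : γ' * g' = γ₀ := hXuc _ _ hg'X hγ₀
    -- predicate: index i's orbit point is in V
    have hmin : ∀ i, i < j γ → a (e i * γ₀) ω₀ ∉ V := by
      intro i hi
      have := mem_iInter.mp (mem_iInter.mp hgmin i) hi
      rw [mem_preimage, hac, mul_assoc, hγeq] at this
      exact this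
    have hmin' : ∀ i, i < j γ' → a (e i * γ₀) ω₀ ∉ V := by
      intro i hi
      have := mem_iInter.mp (mem_iInter.mp hg'min i) hi
      rw [mem_preimage, hac, mul_assoc, hγ'eq] at this
      exact this
    have hself : a (e (j γ) * γ₀) ω₀ ∈ V := by
      rw [hj1 γ, ← hγeq]
      have : γ⁻¹ * (γ * g) = g := by group
      rw [this]; exact hgV
    have hself' : a (e (j γ') * γ₀) ω₀ ∈ V := by
      rw [hj1 γ', ← hγ'eq]
      have : γ'⁻¹ * (γ' * g') = g' := by group
      rw [this]; exact hg'V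
    have hjj : j γ = j γ' := by
      rcases lt_trichotomy (j γ) (j γ') with h | h | h
      · exact absurd hself (hmin' _ h)
      · exact h
      · exact absurd hself' (hmin _ h)
    have : γ⁻¹ = γ'⁻¹ := by rw [← hj1 γ, ← hj1 γ', hjj]
    have hγγ' : γ = γ' := inv_injective this
    have : γ * g = γ * g' := by rw [hγeq, hγγ', hγ'eq]
    exact mul_left_cancel this
  · filter_upwards [hXae] with ω₀ hX0 hV0
    obtain ⟨⟨γ₀, hγ₀⟩, hXuc⟩ := hX0
    have hPex : ∃ i, a (e i * γ₀) ω₀ ∈ V := by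
      refine ⟨j γ₀, ?_⟩
      rw [hj1 γ₀, inv_mul_cancel, ha1]
      exact hV0
    let n := Nat.find hPex
    have hn : a (e n * γ₀) ω₀ ∈ V := Nat.find_spec hPex
    have hnmin : ∀ i, i < n → a (e i * γ₀) ω₀ ∉ V := fun i hi => Nat.find_min hPex hi
    set g := e n * γ₀ with hg
    refine mem_orbE.mpr ⟨g, mem_iUnion.mpr ⟨γ₀ * g⁻¹, ?_, ?_⟩⟩
    · refine ⟨hn, ?_⟩
      rw [mem_preimage, hac]
      have : γ₀ * g⁻¹ * g = γ₀ := by group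
      rw [this]; exact hγ₀
    · -- minimality part
      have hle : j (γ₀ * g⁻¹) ≤ n := by
        apply Nat.find_le
        rw [hg]; group
      refine mem_iInter.mpr fun i => mem_iInter.mpr fun hi => ?_
      rw [mem_preimage, hac, mul_assoc]
      have : γ₀ * g⁻¹ * g = γ₀ := by group
      rw [this]
      exact hnmin i (lt_of_lt_of_le hi hle)


/-- exact invariance of saturations under the same action -/
lemma preimage_orbE_self {a : Γ → Ω → Ω} (hac : ∀ γ δ ω, a γ (a δ ω) = a (γ * δ) ω)
    (W : Set Ω) (δ : Γ) : (a δ) ⁻¹' (orbE a W) = orbE a W := by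
  ext ω
  simp only [mem_preimage, mem_orbE]
  constructor
  · rintro ⟨γ, hγ⟩; exact ⟨γ * δ, by rwa [← hac]⟩
  · rintro ⟨γ, hγ⟩
    refine ⟨γ * δ⁻¹, ?_⟩
    rw [hac]
    have : γ * δ⁻¹ * δ = γ := by group
    rwa [this]

/-- Good sets: meeting a.e. orbit of each action at most once. -/
def Pg (m : Measure Ω) (al ar : Γ → Ω → Ω) (W : Set Ω) : Prop :=
  MeasurableSet W ∧ (∀ᵐ ω ∂m, UC al W ω) ∧ (∀ᵐ ω ∂m, UC ar W ω)

/-- Totally unsaturated part relative to `W`. -/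
def Cg (al ar : Γ → Ω → Ω) (W : Set Ω) : Set Ω := (orbE ar W)ᶜ ∩ (orbE al W)ᶜ

/-- Admissible augmentations of `W`. -/
def Sg (m : Measure Ω) (al ar : Γ → Ω → Ω) (W V : Set Ω) : Prop :=
  MeasurableSet V ∧ V ⊆ Cg al ar W ∧ (∀ᵐ ω ∂m, UC al V ω) ∧ (∀ᵐ ω ∂m, UC ar V ω)

lemma UC_union_of {a : Γ → Ω → Ω} (hac : ∀ γ δ ω, a γ (a δ ω) = a (γ * δ) ω)
    {W V : Set Ω} {ω : Ω} (hW : UC a W ω) (hV : UC a V ω)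
    (hVW : V ⊆ (orbE a W)ᶜ) : UC a (W ∪ V) ω := by
  have mixed : ∀ g g' : Γ, a g ω ∈ W → a g' ω ∈ V → False := by
    intro g g' hg hg'
    refine hVW hg' (mem_orbE.mpr ⟨g * g'⁻¹, ?_⟩)
    rw [hac]
    have : g * g'⁻¹ * g' = g := by group
    rwa [this]
  intro g g' hg hg'
  rcases hg with hg | hg <;> rcases hg' with hg' | hg'
  · exact hW g g' hg hg'
  · exact absurd (mixed g g' hg hg') not_false
  · exact absurd (mixed g' g hg' hg) not_false
  · exact hV g g' hg hg'

lemma Pg_union {al ar : Γ → Ω → Ω}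
    (hlac : ∀ γ δ ω, al γ (al δ ω) = al (γ * δ) ω)
    (hrac : ∀ γ δ ω, ar γ (ar δ ω) = ar (γ * δ) ω)
    {W V : Set Ω} (hPW : Pg m al ar W) (hSV : Sg m al ar W V) :
    Pg m al ar (W ∪ V) := by
  refine ⟨hPW.1.union hSV.1, ?_, ?_⟩
  · filter_upwards [hPW.2.1, hSV.2.2.1] with ω h1 h2
    exact UC_union_of hlac h1 h2 (fun x hx => (hSV.2.1 hx).2)
  · filter_upwards [hPW.2.2, hSV.2.2.2] with ω h1 h2
    exact UC_union_of hrac h1 h2 (fun x hx => (hSV.2.1 hx).1)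


lemma null_of_ae_imp {s t : Set Ω} (h : ∀ᵐ ω ∂m, ω ∈ s → ω ∈ t) (ht : m t = 0) :
    m s = 0 := by
  have hbad : m {ω | ¬ (ω ∈ s → ω ∈ t)} = 0 := by
    rw [ae_iff] at h; exact h
  refine measure_mono_null (fun ω hω => ?_) (measure_union_null ht hbad)
  by_cases hc : ω ∈ t
  · exact Or.inl hc
  · exact Or.inr (fun himp => hc (himp hω))

lemma measurableSet_Cg {al ar : Γ → Ω → Ω}
    (hlmeas : ∀ γ, Measurable (al γ)) (hrmeas : ∀ γ, Measurable (ar γ))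
    {W : Set Ω} (hW : MeasurableSet W) : MeasurableSet (Cg al ar W) :=
  ((measurableSet_orbE hrmeas hW).compl).inter ((measurableSet_orbE hlmeas hW).compl)

/-- The ergodicity step: if the totally unsaturated part of a good set `W` is null, then
`W` has full mass `m X = m Y`. -/
lemma ergodic_dichotomy {al ar : Γ → Ω → Ω}
    (hl1 : ∀ ω, al 1 ω = ω) (hlac : ∀ γ δ ω, al γ (al δ ω) = al (γ * δ) ω)
    (hlmeas : ∀ γ, Measurable (al γ)) (hlmp : ∀ γ, MeasurePreserving (al γ) m m)
    (hr1 : ∀ ω, ar 1 ω = ω) (hrac : ∀ γ δ ω, ar γ (ar δ ω) = ar (γ * δ) ω)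
    (hrmeas : ∀ γ, Measurable (ar γ)) (hrmp : ∀ γ, MeasurePreserving (ar γ) m m)
    (hcomm : ∀ γ δ ω, al γ (ar δ ω) = ar δ (al γ ω))
    (herg : ∀ A : Set Ω, MeasurableSet A → (∀ γ, al γ ⁻¹' A = A) → (∀ γ, ar γ ⁻¹' A = A) →
      m A = 0 ∨ m Aᶜ = 0)
    {X Y W : Set Ω} (hXm : MeasurableSet X)
    (hXae : ∀ᵐ ω ∂m, (∃ γ, ar γ ω ∈ X) ∧ UC ar X ω)
    (hYm : MeasurableSet Y)
    (hYae : ∀ᵐ ω ∂m, (∃ γ, al γ ω ∈ Y) ∧ UC al Y ω)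
    (hPW : Pg m al ar W) (hC0 : m (Cg al ar W) = 0) :
    m W = m X ∨ m W = m Y := by
  set U : Set Ω := (orbE ar W)ᶜ with hU
  set D : Set Ω := orbE al U with hD
  have hUm : MeasurableSet U := (measurableSet_orbE hrmeas hPW.1).compl
  have hDm : MeasurableSet D := measurableSet_orbE hlmeas hUm
  have hU_r : ∀ δ, (ar δ) ⁻¹' U = U := fun δ => by
    rw [hU, preimage_compl, preimage_orbE_self hrac]
  have hD_l : ∀ γ, (al γ) ⁻¹' D = D := fun γ => preimage_orbE_self hlac U γ
  have hD_r : ∀ δ, (ar δ) ⁻¹' D = D := by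
    intro δ
    ext ω
    simp only [mem_preimage, hD, mem_orbE]
    constructor
    · rintro ⟨γ, hγ⟩
      rw [hcomm] at hγ
      have : al γ ω ∈ (ar δ) ⁻¹' U := hγ
      rw [hU_r δ] at this
      exact ⟨γ, this⟩
    · rintro ⟨γ, hγ⟩
      refine ⟨γ, ?_⟩
      rw [hcomm]
      show al γ ω ∈ (ar δ) ⁻¹' U
      rw [hU_r δ]
      exact hγ
  rcases herg D hDm hD_l hD_r with hD0 | hDc0
  · left
    have hU0 : m U = 0 := measure_mono_null (subset_orbE hl1 U) hD0
    have h1 : m (X \ orbE ar W) = 0 := measure_mono_null (fun ω hω => hω.2) hU0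
    have h2 : m (X ∩ orbE ar W) = m X := by
      have h3 := measure_inter_add_diff (μ := m) X (measurableSet_orbE hrmeas hPW.1)
      rw [h1, add_zero] at h3
      exact h3
    rw [measure_eq_inter_orbE hr1 hrac hrmeas hrmp hXm hXae hPW.1 hPW.2.2, h2]
  · right
    have hsub : (orbE al W)ᶜ ⊆ Dᶜ ∪ orbE al (Cg al ar W) := by
      intro ω hω
      by_cases hDmem : ω ∈ D
      · right
        obtain ⟨γ, hγ⟩ := mem_orbE.mp hDmem
        refine mem_orbE.mpr ⟨γ, hγ, fun hc => hω ?_⟩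
        rw [← preimage_orbE_self hlac W γ]
        exact hc
      · left; exact hDmem
    have hnull : m ((orbE al W)ᶜ) = 0 :=
      measure_mono_null hsub (measure_union_null hDc0
        (null_orbE hlmp (measurableSet_Cg hlmeas hrmeas hPW.1) hC0))
    have h1 : m (Y \ orbE al W) = 0 := measure_mono_null (fun ω hω => hω.2) hnull
    have h2 : m (Y ∩ orbE al W) = m Y := by
      have h3 := measure_inter_add_diff (μ := m) Y (measurableSet_orbE hlmeas hPW.1)
      rw [h1, add_zero] at h3
      exact h3
    rw [measure_eq_inter_orbE hl1 hlac hlmeas hlmp hYm hYae hPW.1 hPW.2.1, h2]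

/-- Augmentation: if the totally unsaturated part has positive measure, there is an
admissible augmentation of positive measure. -/
lemma aug_exists {al ar : Γ → Ω → Ω}
    (hl1 : ∀ ω, al 1 ω = ω) (hlac : ∀ γ δ ω, al γ (al δ ω) = al (γ * δ) ω)
    (hlmeas : ∀ γ, Measurable (al γ)) (hlmp : ∀ γ, MeasurePreserving (al γ) m m)
    (hr1 : ∀ ω, ar 1 ω = ω) (hrac : ∀ γ δ ω, ar γ (ar δ ω) = ar (γ * δ) ω)
    (hrmeas : ∀ γ, Measurable (ar γ)) (hrmp : ∀ γ, MeasurePreserving (ar γ) m m)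
    {X Y W : Set Ω} (hXm : MeasurableSet X)
    (hXae : ∀ᵐ ω ∂m, (∃ γ, ar γ ω ∈ X) ∧ UC ar X ω)
    (hYm : MeasurableSet Y)
    (hYae : ∀ᵐ ω ∂m, (∃ γ, al γ ω ∈ Y) ∧ UC al Y ω)
    (hPW : Pg m al ar W) (hCpos : m (Cg al ar W) ≠ 0) :
    ∃ V, Sg m al ar W V ∧ m V ≠ 0 := by
  obtain ⟨V₁, hV₁m, hV₁sub, hV₁uc, hV₁sat⟩ :=
    selector hr1 hrac hrmeas hXm hXae (measurableSet_Cg hlmeas hrmeas hPW.1)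
  obtain ⟨V₂, hV₂m, hV₂sub, hV₂uc, hV₂sat⟩ :=
    selector hl1 hlac hlmeas hYm hYae hV₁m
  refine ⟨V₂, ⟨hV₂m, fun x hx => hV₁sub (hV₂sub hx), hV₂uc, ?_⟩, ?_⟩
  · filter_upwards [hV₁uc] with ω h
    exact h.mono hV₂sub
  · intro h0
    have h1 : m (orbE al V₂) = 0 := null_orbE hlmp hV₂m h0
    have h2 : m V₁ = 0 := null_of_ae_imp hV₂sat h1
    have h3 : m (orbE ar V₁) = 0 := null_orbE hrmp hV₁m h2
    exact hCpos (null_of_ae_imp hV₁sat h3)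

lemma arch_aux (B c : ℝ≥0∞) (hc : c ≠ 0) (hB : B ≠ ⊤) : ∃ N : ℕ, B < N * c := by
  by_cases hct : c = ⊤
  · exact ⟨1, by rw [hct]; simp [hB.lt_top]⟩
  · obtain ⟨N, hN⟩ := exists_nat_gt (B / c).toNNReal
    have hdiv : B / c < ⊤ := ENNReal.div_lt_top hB hc
    refine ⟨N, ?_⟩
    have h1 : B / c < (N : ℝ≥0∞) := by
      have := ENNReal.coe_lt_coe.mpr hN
      rwa [ENNReal.coe_toNNReal hdiv.ne, ENNReal.coe_natCast] at this
    calc B = B / c * c := by rw [ENNReal.div_mul_cancel hc hct]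
    _ < (N : ℝ≥0∞) * c := by
        rw [mul_comm _ c, mul_comm _ c]; exact ENNReal.mul_lt_mul_right hc hct h1

end CommonFD

open CommonFD

/-- In an ergodic self measure-equivalence coupling `(Ω, m)` of a countable
group `Γ` (two commuting free m.p. actions, each with a finite-measure fundamental domain),
if a fundamental domain `X` for the right action and a fundamental domain `Y` for the left
action satisfy `m X = m Y`, then there is a common (two-sided) fundamental domain `Z`. -/
theorem exists_two_sided_fundamental_domain
    {Ω : Type*} [MeasurableSpace Ω] (m : Measure Ω) [SigmaFinite m]
    (Γ : Type*) [Group Γ] [Countable Γ]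
    (l r : Γ → Ω → Ω)
    (hlmeas : ∀ γ, Measurable (l γ)) (hrmeas : ∀ γ, Measurable (r γ))
    (hl1 : l 1 = id) (hr1 : r 1 = id)
    (hlact : ∀ γ₁ γ₂ ω, l γ₁ (l γ₂ ω) = l (γ₁ * γ₂) ω)
    (hract : ∀ γ₁ γ₂ ω, r γ₁ (r γ₂ ω) = r (γ₂ * γ₁) ω)
    (hcomm : ∀ γ δ ω, l γ (r δ ω) = r δ (l γ ω))
    (hlmp : ∀ γ, MeasurePreserving (l γ) m m)
    (hrmp : ∀ γ, MeasurePreserving (r γ) m m)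
    (hlfree : ∀ᵐ ω ∂m, ∀ γ, l γ ω = ω → γ = 1)
    (hrfree : ∀ᵐ ω ∂m, ∀ γ, r γ ω = ω → γ = 1)
    (herg : ∀ A : Set Ω, MeasurableSet A → (∀ γ, l γ ⁻¹' A = A) → (∀ γ, r γ ⁻¹' A = A) →
      m A = 0 ∨ m Aᶜ = 0)
    (X Y : Set Ω)
    (hX : IsFundDom m r X) (hXfin : m X < ⊤)
    (hY : IsFundDom m l Y) (hYfin : m Y < ⊤)
    (hXY : m X = m Y) :
    ∃ Z : Set Ω, IsFundDom m l Z ∧ IsFundDom m r Z := by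
  classical
  -- the right action, rewritten as a left action
  set ar : Γ → Ω → Ω := fun γ ω => r γ⁻¹ ω with har_def
  have har1 : ∀ ω, ar 1 ω = ω := by intro ω; simp [har_def, hr1]
  have harc : ∀ γ δ ω, ar γ (ar δ ω) = ar (γ * δ) ω := by
    intro γ δ ω
    simp only [har_def]
    rw [hract, mul_inv_rev]
  have harmeas : ∀ γ, Measurable (ar γ) := fun γ => hrmeas γ⁻¹
  have harmp : ∀ γ, MeasurePreserving (ar γ) m m := fun γ => hrmp γ⁻¹
  have hal1 : ∀ ω, l 1 ω = ω := by intro ω; rw [hl1]; rfl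
  have hcomm' : ∀ γ δ ω, l γ (ar δ ω) = ar δ (l γ ω) := fun γ δ ω => hcomm γ δ⁻¹ ω
  -- fundamental-domain data in (∃ ∧ UC) form
  have hXae : ∀ᵐ ω ∂m, (∃ γ, ar γ ω ∈ X) ∧ UC ar X ω := by
    filter_upwards [hX.2] with ω h
    obtain ⟨γ₀, h1, h2⟩ := h
    refine ⟨⟨γ₀⁻¹, by simpa [har_def, inv_inv] using h1⟩, ?_⟩
    intro γ γ' hγ hγ'
    have e1 : γ⁻¹ = γ₀ := h2 γ⁻¹ hγ
    have e2 : γ'⁻¹ = γ₀ := h2 γ'⁻¹ hγ'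
    have : γ⁻¹ = γ'⁻¹ := by rw [e1, e2]
    exact inv_injective this
  have hYae : ∀ᵐ ω ∂m, (∃ γ, l γ ω ∈ Y) ∧ UC l Y ω := by
    filter_upwards [hY.2] with ω h
    obtain ⟨γ₀, h1, h2⟩ := h
    exact ⟨⟨γ₀, h1⟩, fun γ γ' hγ hγ' => by rw [h2 γ hγ, h2 γ' hγ']⟩
  have herg' : ∀ A : Set Ω, MeasurableSet A → (∀ γ, l γ ⁻¹' A = A) →
      (∀ γ, ar γ ⁻¹' A = A) → m A = 0 ∨ m Aᶜ = 0 := by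
    intro A hA h1 h2
    refine herg A hA h1 (fun γ => ?_)
    have := h2 γ⁻¹
    simpa [har_def, inv_inv] using this
  -- the choice of near-maximal admissible augmentations
  have hchoice : ∀ W : Set Ω, ∃ V : Set Ω, Pg m l ar W →
      (Sg m l ar W V ∧ ∀ V', Sg m l ar W V' → m V' ≤ 2 * m V) := by
    intro W
    by_cases hPW : Pg m l ar W
    swap
    · exact ⟨∅, fun h => absurd h hPW⟩
    by_cases hz : ∀ V', Sg m l ar W V' → m V' = 0
    · refine ⟨∅, fun _ => ⟨⟨MeasurableSet.empty, empty_subset _,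
        ae_of_all _ (fun ω γ γ' h _ => absurd h (notMem_empty _)),
        ae_of_all _ (fun ω γ γ' h _ => absurd h (notMem_empty _))⟩,
        fun V' hV' => by rw [hz V' hV']; exact zero_le⟩⟩
    push_neg at hz
    obtain ⟨V₀, hV₀S, hV₀ne⟩ := hz
    set s := ⨆ (V' : Set Ω) (_ : Sg m l ar W V'), m V' with hs_def
    have hVle : ∀ V', Sg m l ar W V' → m V' ≤ m X := by
      intro V' hV'
      rw [measure_eq_inter_orbE har1 harc harmeas harmp hX.1 hXae hV'.1 hV'.2.2.2]
      exact measure_mono inter_subset_left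
    have hs0 : s ≠ 0 := by
      intro h
      apply hV₀ne
      have : m V₀ ≤ s := le_iSup₂ (f := fun V' (_ : Sg m l ar W V') => m V') V₀ hV₀S
      rw [h] at this
      exact le_antisymm this zero_le
    have hstop : s ≠ ⊤ := by
      have : s ≤ m X := iSup₂_le hVle
      exact (lt_of_le_of_lt this hXfin).ne
    have hlt : s / 2 < s := ENNReal.half_lt_self hs0 hstop
    rw [hs_def] at hlt
    obtain ⟨V, hV⟩ := lt_iSup_iff.mp hlt
    obtain ⟨hVS, hVlt⟩ := lt_iSup_iff.mp hV
    refine ⟨V, fun _ => ⟨hVS, fun V' hV' => ?_⟩⟩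
    have h1 : m V' ≤ s := le_iSup₂ (f := fun V' (_ : Sg m l ar W V') => m V') V' hV'
    have h2 : s = s / 2 * 2 := (ENNReal.div_mul_cancel (two_ne_zero) ENNReal.ofNat_ne_top).symm
    calc m V' ≤ s := h1
    _ = s / 2 * 2 := h2
    _ ≤ m V * 2 := mul_le_mul_left hVlt.le 2
    _ = 2 * m V := mul_comm _ _
  choose f hf using hchoice
  obtain ⟨seq, hseq0, hseqS⟩ : ∃ seq : ℕ → Set Ω, seq 0 = ∅ ∧
      ∀ n, seq (n + 1) = seq n ∪ f (seq n) :=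
    ⟨fun n => Nat.rec (∅ : Set Ω) (fun _ W => W ∪ f W) n, rfl, fun n => rfl⟩
  have hPseq : ∀ n, Pg m l ar (seq n) := by
    intro n
    induction n with
    | zero =>
      rw [hseq0]
      exact ⟨MeasurableSet.empty,
        ae_of_all _ (fun ω γ γ' h _ => absurd h (notMem_empty _)),
        ae_of_all _ (fun ω γ γ' h _ => absurd h (notMem_empty _))⟩
    | succ n ih =>
      rw [hseqS n]
      exact Pg_union hlact harc ih ((hf (seq n) ih).1)
  have hmono : ∀ n k, n ≤ k → seq n ⊆ seq k := by
    intro n k hnk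
    induction k with
    | zero => rw [Nat.le_zero.mp hnk]
    | succ k ih =>
      rcases Nat.lt_or_ge n (k + 1) with h | h
      · have := ih (Nat.lt_succ_iff.mp h)
        rw [hseqS k]
        exact this.trans subset_union_left
      · rw [Nat.le_antisymm hnk h]
  set Z : Set Ω := ⋃ n, seq n with hZ_def
  have hZm : MeasurableSet Z := MeasurableSet.iUnion fun n => (hPseq n).1
  have hZP : Pg m l ar Z := by
    refine ⟨hZm, ?_, ?_⟩
    · filter_upwards [ae_all_iff.mpr (fun n => (hPseq n).2.1)] with ω h
      intro γ γ' h1 h2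
      obtain ⟨n1, hn1⟩ := mem_iUnion.mp h1
      obtain ⟨n2, hn2⟩ := mem_iUnion.mp h2
      exact h (max n1 n2) γ γ' (hmono n1 _ (le_max_left _ _) hn1)
        (hmono n2 _ (le_max_right _ _) hn2)
    · filter_upwards [ae_all_iff.mpr (fun n => (hPseq n).2.2)] with ω h
      intro γ γ' h1 h2
      obtain ⟨n1, hn1⟩ := mem_iUnion.mp h1
      obtain ⟨n2, hn2⟩ := mem_iUnion.mp h2
      exact h (max n1 n2) γ γ' (hmono n1 _ (le_max_left _ _) hn1)
        (hmono n2 _ (le_max_right _ _) hn2)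
  -- measure bookkeeping for the recursion
  have hdisj : ∀ n, Disjoint (seq n) (f (seq n)) := by
    intro n
    refine Set.disjoint_left.mpr fun ω hω hωf => ?_
    have hC : ω ∈ Cg l ar (seq n) := ((hf (seq n) (hPseq n)).1).2.1 hωf
    exact hC.1 (subset_orbE har1 (seq n) hω)
  have hmeasure : ∀ n, m (seq (n + 1)) = m (seq n) + m (f (seq n)) := by
    intro n
    rw [hseqS n]
    exact measure_union (hdisj n) ((hf (seq n) (hPseq n)).1).1
  have hseqle : ∀ n, m (seq n) ≤ m X := by
    intro n
    rw [measure_eq_inter_orbE har1 harc harmeas harmp hX.1 hXae (hPseq n).1 (hPseq n).2.2]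
    exact measure_mono inter_subset_left
  -- Z has null totally-unsaturated part
  have hC0 : m (Cg l ar Z) = 0 := by
    by_contra hC
    obtain ⟨V, hSV, hVne⟩ := aug_exists hal1 hlact hlmeas hlmp har1 harc harmeas harmp
      hX.1 hXae hY.1 hYae hZP hC
    have hSV_n : ∀ n, Sg m l ar (seq n) V := by
      intro n
      refine ⟨hSV.1, fun ω hω => ?_, hSV.2.2.1, hSV.2.2.2⟩
      have h1 := hSV.2.1 hω
      exact ⟨fun hc => h1.1 (orbE_mono (subset_iUnion seq n) hc),
        fun hc => h1.2 (orbE_mono (subset_iUnion seq n) hc)⟩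
    have hVle2 : ∀ n, m V ≤ 2 * m (f (seq n)) :=
      fun n => (hf (seq n) (hPseq n)).2 V (hSV_n n)
    have hgrow : ∀ n : ℕ, (n : ℝ≥0∞) * m V ≤ 2 * m (seq n) := by
      intro n
      induction n with
      | zero => simp
      | succ n ih =>
        have : ((n + 1 : ℕ) : ℝ≥0∞) * m V = (n : ℝ≥0∞) * m V + m V := by
          push_cast
          ring
        rw [this, hmeasure n, mul_add]
        exact add_le_add ih (hVle2 n)
    obtain ⟨N, hN⟩ := arch_aux (2 * m X) (m V) hVne
      (ENNReal.mul_ne_top ENNReal.ofNat_ne_top hXfin.ne)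
    have : (N : ℝ≥0∞) * m V ≤ 2 * m X :=
      (hgrow N).trans (mul_le_mul_right (hseqle N) 2)
    exact absurd this (not_le.mpr hN)
  -- hence Z has full mass on both sides
  have hZX : m Z = m X := by
    rcases ergodic_dichotomy hal1 hlact hlmeas hlmp har1 harc harmeas harmp hcomm' herg'
      hX.1 hXae hY.1 hYae hZP hC0 with h | h
    · exact h
    · rw [h, hXY]
  have hZY : m Z = m Y := by rw [hZX, hXY]
  -- defect sets are null
  have hXdef : m (X \ orbE ar Z) = 0 := by
    have h1 : m Z = m (X ∩ orbE ar Z) :=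
      measure_eq_inter_orbE har1 harc harmeas harmp hX.1 hXae hZm hZP.2.2
    have h2 := measure_inter_add_diff (μ := m) X (measurableSet_orbE harmeas hZm)
    rw [← h1, hZX] at h2
    nth_rewrite 2 [← add_zero (m X)] at h2
    exact (ENNReal.add_right_inj hXfin.ne).mp h2
  have hYdef : m (Y \ orbE l Z) = 0 := by
    have h1 : m Z = m (Y ∩ orbE l Z) :=
      measure_eq_inter_orbE hal1 hlact hlmeas hlmp hY.1 hYae hZm hZP.2.1
    have h2 := measure_inter_add_diff (μ := m) Y (measurableSet_orbE hlmeas hZm)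
    rw [← h1, hZY] at h2
    nth_rewrite 2 [← add_zero (m Y)] at h2
    exact (ENNReal.add_right_inj hYfin.ne).mp h2
  -- avoid the orbits of the defect sets
  have hXav : ∀ᵐ ω ∂m, ω ∉ ⋃ γ : Γ, (r γ) ⁻¹' (X \ orbE ar Z) := by
    rw [← measure_eq_zero_iff_ae_notMem]
    refine measure_iUnion_null fun γ => ?_
    rw [(hrmp γ).measure_preimage
      ((hX.1.diff (measurableSet_orbE harmeas hZm)).nullMeasurableSet)]
    exact hXdef
  have hYav : ∀ᵐ ω ∂m, ω ∉ ⋃ γ : Γ, (l γ) ⁻¹' (Y \ orbE l Z) := by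
    rw [← measure_eq_zero_iff_ae_notMem]
    refine measure_iUnion_null fun γ => ?_
    rw [(hlmp γ).measure_preimage
      ((hY.1.diff (measurableSet_orbE hlmeas hZm)).nullMeasurableSet)]
    exact hYdef
  refine ⟨Z, ⟨hZm, ?_⟩, ⟨hZm, ?_⟩⟩
  · filter_upwards [hY.2, hZP.2.1, hYav] with ω hEY hUC hav
    obtain ⟨γ₀, h1, _⟩ := hEY
    have h2 : l γ₀ ω ∈ orbE l Z := by
      by_contra hc
      exact hav (mem_iUnion.mpr ⟨γ₀, h1, hc⟩)
    obtain ⟨δ, hδ⟩ := mem_orbE.mp h2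
    rw [hlact] at hδ
    exact ⟨δ * γ₀, hδ, fun γ' h' => hUC γ' (δ * γ₀) h' hδ⟩
  · filter_upwards [hX.2, hZP.2.2, hXav] with ω hEX hUC hav
    obtain ⟨γ₀, h1, _⟩ := hEX
    have h2 : r γ₀ ω ∈ orbE ar Z := by
      by_contra hc
      exact hav (mem_iUnion.mpr ⟨γ₀, h1, hc⟩)
    obtain ⟨δ, hδ⟩ := mem_orbE.mp h2
    have hδ' : r (γ₀ * δ⁻¹) ω ∈ Z := by
      have : ar δ (r γ₀ ω) = r (γ₀ * δ⁻¹) ω := by rw [har_def]; exact hract δ⁻¹ γ₀ ω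
      rwa [this] at hδ
    refine ⟨γ₀ * δ⁻¹, hδ', fun γ' h' => ?_⟩
    have e1 : ar γ'⁻¹ ω ∈ Z := by
      rw [har_def]
      simpa [inv_inv] using h'
    have e2 : ar (γ₀ * δ⁻¹)⁻¹ ω ∈ Z := by
      rw [har_def]
      simpa [inv_inv] using hδ'
    have := hUC γ'⁻¹ (γ₀ * δ⁻¹)⁻¹ e1 e2
    exact inv_injective this
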